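/- Let μ > 0 and ℏ > 0 be real constants and let F, G : ℝ → ℝ be continuous. Define Sⁿ recursively by S⁰(u,v) = u/4 and Sⁿ(u,v) = u/4 + (μ/(2ℏ²)) ∫_0^u F(u') (∫_0^v G(v')·S^{n−1}(u',v') dv') du'. Then for all real u, v the sequence Sⁿ(u,v) converges as n → ∞ to T_S(u,v), where T_S(u,v) = u/4 + (μ/(2ℏ²)) ∫_0^v G(v') (∫_0^u F(u')·(u'/4)·₀F₁(;1; (μ/(2ℏ²))·G̃(v,v')·F̃(u,u')) du') dv'. -/

import Mathlib

open intervalIntegral MeasureTheory Filter Finset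

/-- The confluent hypergeometric limit function ₀F₁(;1;z) = Σ_{n=0}^∞ zⁿ/(n!)². -/
noncomputable def hyp0F1one (z : ℝ) : ℝ := ∑' n : ℕ, z ^ n / ((n.factorial : ℝ)) ^ 2

noncomputable def prim (F : ℝ → ℝ) (x : ℝ) : ℝ := ∫ s in (0:ℝ)..x, F s

lemma prim_hasDerivAt {F : ℝ → ℝ} (hF : Continuous F) (x : ℝ) :
    HasDerivAt (prim F) (F x) x :=
  (hF.integral_hasStrictDerivAt 0 x).hasDerivAt

lemma prim_continuous {F : ℝ → ℝ} (hF : Continuous F) : Continuous (prim F) :=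
  continuous_iff_continuousAt.2 fun x => (prim_hasDerivAt hF x).continuousAt

lemma prim_zero (F : ℝ → ℝ) : prim F 0 = 0 := intervalIntegral.integral_same

noncomputable def Vint (w F : ℝ → ℝ) (j : ℕ) (x : ℝ) : ℝ :=
  ∫ s in (0:ℝ)..x, w s * (-prim F s) ^ j

lemma Vint_hasDerivAt {w F : ℝ → ℝ} (hw : Continuous w) (hF : Continuous F) (j : ℕ) (x : ℝ) :
    HasDerivAt (Vint w F j) (w x * (-prim F x) ^ j) x :=
  ((hw.mul (((prim_continuous hF).neg).pow j)).integral_hasStrictDerivAt 0 x).hasDerivAt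

lemma Vint_continuous {w F : ℝ → ℝ} (hw : Continuous w) (hF : Continuous F) (j : ℕ) :
    Continuous (Vint w F j) :=
  continuous_iff_continuousAt.2 fun x => (Vint_hasDerivAt hw hF j x).continuousAt

noncomputable def akf (w F : ℝ → ℝ) (k : ℕ) (t : ℝ) : ℝ :=
  ∫ s in (0:ℝ)..t, w s * (prim F t - prim F s) ^ k

lemma akf_eq_sum {w F : ℝ → ℝ} (hw : Continuous w) (hF : Continuous F) (k : ℕ) (t : ℝ) :
    akf w F k t
      = ∑ m ∈ Finset.range (k + 1),
          (prim F t) ^ m * Vint w F (k - m) t * (k.choose m : ℝ) := by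
  have hint : ∀ s : ℝ, w s * (prim F t - prim F s) ^ k
      = ∑ m ∈ Finset.range (k + 1),
          (prim F t) ^ m * (w s * (-prim F s) ^ (k - m)) * (k.choose m : ℝ) := by
    intro s
    rw [sub_eq_add_neg, add_pow, Finset.mul_sum]
    refine Finset.sum_congr rfl fun m _ => by ring
  rw [akf]
  rw [intervalIntegral.integral_congr (g := fun s => ∑ m ∈ Finset.range (k + 1),
      (prim F t) ^ m * (w s * (-prim F s) ^ (k - m)) * (k.choose m : ℝ))
      (fun s _ => hint s)]
  rw [intervalIntegral.integral_finset_sum]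
  · refine Finset.sum_congr rfl fun m _ => ?_
    rw [intervalIntegral.integral_mul_const, intervalIntegral.integral_const_mul]
    rfl
  · intro m _
    exact ((continuous_const.mul (hw.mul (((prim_continuous hF).neg).pow _))).mul
      continuous_const).intervalIntegrable 0 t

lemma akf_continuous {w F : ℝ → ℝ} (hw : Continuous w) (hF : Continuous F) (k : ℕ) :
    Continuous (akf w F k) := by
  have : akf w F k = fun t => ∑ m ∈ Finset.range (k + 1),
      (prim F t) ^ m * Vint w F (k - m) t * (k.choose m : ℝ) :=
    funext fun t => akf_eq_sum hw hF k t
  rw [this]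
  exact continuous_finset_sum _ fun m _ =>
    (((prim_continuous hF).pow m).mul (Vint_continuous hw hF _)).mul continuous_const

lemma akf_zero (w F : ℝ → ℝ) (k : ℕ) : akf w F k 0 = 0 := intervalIntegral.integral_same

lemma akf_succ_hasDerivAt {w F : ℝ → ℝ} (hw : Continuous w) (hF : Continuous F) (k : ℕ) (t : ℝ) :
    HasDerivAt (akf w F (k + 1)) (((k : ℝ) + 1) * (F t * akf w F k t)) t := by
  have hrep : akf w F (k + 1) = fun t => ∑ m ∈ Finset.range (k + 2),
      (prim F t) ^ m * Vint w F (k + 1 - m) t * ((k + 1).choose m : ℝ) :=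
    funext fun t => akf_eq_sum hw hF (k + 1) t
  rw [hrep]
  have hterm : ∀ m ∈ Finset.range (k + 2), HasDerivAt
      (fun t => (prim F t) ^ m * Vint w F (k + 1 - m) t * ((k + 1).choose m : ℝ))
      (((m : ℝ) * (prim F t) ^ (m - 1) * F t * Vint w F (k + 1 - m) t
        + (prim F t) ^ m * (w t * (-prim F t) ^ (k + 1 - m))) * ((k + 1).choose m : ℝ)) t := by
    intro m _
    exact ((((prim_hasDerivAt hF t).pow m).mul (Vint_hasDerivAt hw hF _ t)).mul_const _)
  have hsum : HasDerivAt
      (fun t => ∑ m ∈ Finset.range (k + 2),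
        (prim F t) ^ m * Vint w F (k + 1 - m) t * ((k + 1).choose m : ℝ))
      (∑ m ∈ Finset.range (k + 2),
        ((m : ℝ) * (prim F t) ^ (m - 1) * F t * Vint w F (k + 1 - m) t
          + (prim F t) ^ m * (w t * (-prim F t) ^ (k + 1 - m))) * ((k + 1).choose m : ℝ)) t :=
    HasDerivAt.fun_sum hterm
  convert hsum using 1
  -- algebra: show the claimed derivative equals the sum of term derivatives
  have hsplit : ∀ m ∈ Finset.range (k + 2),
      ((m : ℝ) * (prim F t) ^ (m - 1) * F t * Vint w F (k + 1 - m) t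
        + (prim F t) ^ m * (w t * (-prim F t) ^ (k + 1 - m))) * ((k + 1).choose m : ℝ)
      = (m : ℝ) * (prim F t) ^ (m - 1) * F t * Vint w F (k + 1 - m) t * ((k + 1).choose m : ℝ)
        + w t * ((prim F t) ^ m * (-prim F t) ^ (k + 1 - m) * ((k + 1).choose m : ℝ)) := by
    intro m _; ring
  rw [Finset.sum_congr rfl hsplit, Finset.sum_add_distrib, ← Finset.mul_sum]
  have hB : ∑ m ∈ Finset.range (k + 2),
      (prim F t) ^ m * (-prim F t) ^ (k + 1 - m) * ((k + 1).choose m : ℝ) = 0 := by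
    rw [← add_pow]
    simp
  rw [hB, mul_zero, add_zero]
  have hA : ∑ m ∈ Finset.range (k + 2),
      (m : ℝ) * (prim F t) ^ (m - 1) * F t * Vint w F (k + 1 - m) t * ((k + 1).choose m : ℝ)
      = ((k : ℝ) + 1) * (F t * akf w F k t) := by
    rw [Finset.sum_range_succ']
    simp only [Nat.cast_zero, zero_mul, mul_zero, zero_add, add_zero]
    rw [akf_eq_sum hw hF k t, Finset.mul_sum, Finset.mul_sum]
    refine Finset.sum_congr rfl fun i hi => ?_
    have hchoose : ((k + 1).choose (i + 1) : ℝ) * ((i : ℝ) + 1) = ((k : ℝ) + 1) * (k.choose i : ℝ) := by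
      have h2 : ((k + 1) * (k.choose i) : ℕ) = ((k + 1).choose (i + 1) * (i + 1) : ℕ) :=
        Nat.add_one_mul_choose_eq k i
      have h3 : ((k : ℝ) + 1) * (k.choose i : ℝ) = ((k + 1).choose (i + 1) : ℝ) * ((i : ℝ) + 1) := by
        exact_mod_cast h2
      linarith
    have hsub : k + 1 - (i + 1) = k - i := by omega
    rw [hsub]
    push_cast
    linear_combination (prim F t ^ i * F t * Vint w F (k - i) t) * hchoose
  rw [hA]

lemma key_lemma {w F : ℝ → ℝ} (hw : Continuous w) (hF : Continuous F) (k : ℕ) (u : ℝ) :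
    ∫ t in (0:ℝ)..u, F t * akf w F k t = akf w F (k + 1) u / ((k : ℝ) + 1) := by
  set L : ℝ → ℝ := fun x => ∫ t in (0:ℝ)..x, F t * akf w F k t with hL
  have hLd : ∀ x, HasDerivAt L (F x * akf w F k x) x := fun x =>
    ((hF.mul (akf_continuous hw hF k)).integral_hasStrictDerivAt 0 x).hasDerivAt
  have hD : ∀ x, HasDerivAt (fun y => akf w F (k + 1) y - ((k : ℝ) + 1) * L y) 0 x := by
    intro x
    have := (akf_succ_hasDerivAt hw hF k x).fun_sub ((hLd x).const_mul ((k : ℝ) + 1))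
    simpa using this
  have hconst : ∀ x y : ℝ,
      akf w F (k + 1) x - ((k : ℝ) + 1) * L x = akf w F (k + 1) y - ((k : ℝ) + 1) * L y := by
    intro x y
    exact is_const_of_deriv_eq_zero (fun z => (hD z).differentiableAt)
      (fun z => (hD z).deriv) x y
  have h0 : L 0 = 0 := intervalIntegral.integral_same
  have := hconst u 0
  rw [h0, akf_zero, mul_zero, sub_zero] at this
  have hk : ((k : ℝ) + 1) ≠ 0 := by positivity
  rw [← hL] at *
  field_simp
  linarith [this]

lemma pow_prim_integral {G : ℝ → ℝ} (hG : Continuous G) (k : ℕ) (v : ℝ) :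
    ∫ t in (0:ℝ)..v, G t * (prim G t) ^ k = (prim G v) ^ (k + 1) / ((k : ℝ) + 1) := by
  have hd : ∀ t ∈ Set.uIcc (0:ℝ) v, HasDerivAt (fun x => (prim G x) ^ (k + 1) / ((k : ℝ) + 1))
      (G t * (prim G t) ^ k) t := by
    intro t _
    have := ((prim_hasDerivAt hG t).fun_pow (k + 1)).div_const ((k : ℝ) + 1)
    refine this.congr_deriv ?_
    have hk : ((k : ℝ) + 1) ≠ 0 := by positivity
    rw [div_eq_iff hk]; push_cast [Nat.add_sub_cancel]
    ring
  have hint : IntervalIntegrable (fun t => G t * (prim G t) ^ k) MeasureTheory.volume 0 v :=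
    (hG.mul ((prim_continuous hG).pow k)).intervalIntegrable 0 v
  rw [intervalIntegral.integral_eq_sub_of_hasDerivAt hd hint, prim_zero]
  rw [zero_pow (Nat.succ_ne_zero k), zero_div, sub_zero]

lemma bk_closed {G : ℝ → ℝ} (hG : Continuous G) (k : ℕ) (v : ℝ) :
    akf G G k v = (prim G v) ^ (k + 1) / ((k : ℝ) + 1) := by
  have hd : ∀ t ∈ Set.uIcc (0:ℝ) v, HasDerivAt
      (fun x => -((prim G v - prim G x) ^ (k + 1)) / ((k : ℝ) + 1))
      (G t * (prim G v - prim G t) ^ k) t := by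
    intro t _
    have h1 : HasDerivAt (fun x => prim G v - prim G x) (-(G t)) t := by
      simpa using (hasDerivAt_const t (prim G v)).fun_sub (prim_hasDerivAt hG t)
    have := ((h1.fun_pow (k + 1)).fun_neg).div_const ((k : ℝ) + 1)
    refine this.congr_deriv ?_
    have hk : ((k : ℝ) + 1) ≠ 0 := by positivity
    rw [div_eq_iff hk]; push_cast [Nat.add_sub_cancel]
    ring
  have hint : IntervalIntegrable (fun t => G t * (prim G v - prim G t) ^ k)
      MeasureTheory.volume 0 v :=
    (hG.mul ((continuous_const.sub (prim_continuous hG)).pow k)).intervalIntegrable 0 v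
  rw [akf, intervalIntegral.integral_eq_sub_of_hasDerivAt hd hint, prim_zero, sub_self,
    zero_pow (Nat.succ_ne_zero k), sub_zero]
  ring

lemma summable_pow_div_fact_sq (q : ℝ) :
    Summable (fun k : ℕ => |q| ^ k / ((k.factorial : ℝ)) ^ 2) := by
  refine Summable.of_nonneg_of_le (fun k => by positivity) (fun k => ?_)
    (Real.summable_pow_div_factorial |q|)
  have h1 : (1 : ℝ) ≤ (k.factorial : ℝ) := by exact_mod_cast Nat.one_le_iff_ne_zero.2 k.factorial_ne_zero
  have h2 : (k.factorial : ℝ) ≤ ((k.factorial : ℝ)) ^ 2 := by nlinarith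
  apply div_le_div_of_nonneg_left (by positivity) (by positivity) h2
  
lemma hasSum_hyp (z : ℝ) :
    HasSum (fun k : ℕ => z ^ k / ((k.factorial : ℝ)) ^ 2) (hyp0F1one z) := by
  have hs : Summable (fun k : ℕ => z ^ k / ((k.factorial : ℝ)) ^ 2) := by
    apply Summable.of_abs
    have : (fun k : ℕ => |z ^ k / ((k.factorial : ℝ)) ^ 2|)
        = fun k : ℕ => |z| ^ k / ((k.factorial : ℝ)) ^ 2 := by
      funext k
      rw [abs_div, abs_pow, abs_of_nonneg (a := ((k.factorial : ℝ)) ^ 2) (by positivity)]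
    rw [this]
    exact summable_pow_div_fact_sq z
  exact hs.hasSum

lemma integral_eq_prim_sub {G : ℝ → ℝ} (hG : Continuous G) (a b : ℝ) :
    (∫ s in a..b, G s) = prim G b - prim G a := by
  have h1 : IntervalIntegrable G MeasureTheory.volume 0 a := hG.intervalIntegrable 0 a
  have h2 : IntervalIntegrable G MeasureTheory.volume a b := hG.intervalIntegrable a b
  have := intervalIntegral.integral_add_adjacent_intervals h1 h2
  unfold prim
  linarith

lemma akf_zero_eq (w : ℝ → ℝ) (F : ℝ → ℝ) (t : ℝ) :
    akf w F 0 t = ∫ s in (0:ℝ)..t, w s :=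
  intervalIntegral.integral_congr (fun s _ => by simp)

lemma rep_lemma (c : ℝ) {F G : ℝ → ℝ} (hF : Continuous F) (hG : Continuous G)
    (S : ℕ → ℝ → ℝ → ℝ)
    (hS0 : ∀ u v : ℝ, S 0 u v = u / 4)
    (hSn : ∀ (n : ℕ) (u v : ℝ), S (n + 1) u v =
      u / 4 + c * ∫ u' in (0:ℝ)..u, F u' * ∫ v' in (0:ℝ)..v, G v' * S n u' v') :
    ∀ n u v, S n u v = u / 4 + ∑ k ∈ Finset.range n,
      c ^ (k + 1) * akf (fun s => F s * (s / 4)) F k u * (prim G v) ^ (k + 1)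
        / (((k.factorial : ℝ)) ^ 2 * ((k : ℝ) + 1)) := by
  set w : ℝ → ℝ := fun s => F s * (s / 4) with hw_def
  have hw : Continuous w := hF.mul (continuous_id.div_const 4)
  intro n
  induction n with
  | zero => intro u v; simp [hS0]
  | succ n ih =>
    intro u v
    rw [hSn]
    -- inner integral
    have hinner : ∀ u' : ℝ, (∫ v' in (0:ℝ)..v, G v' * S n u' v')
        = (u' / 4) * prim G v + ∑ k ∈ Finset.range n,
            (c ^ (k + 1) * akf w F k u' / (((k.factorial : ℝ)) ^ 2 * ((k : ℝ) + 1)))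
              * ((prim G v) ^ (k + 2) / ((k : ℝ) + 2)) := by
      intro u'
      have hpt : ∀ v' : ℝ, G v' * S n u' v'
          = G v' * (u' / 4) + ∑ k ∈ Finset.range n,
              (c ^ (k + 1) * akf w F k u' / (((k.factorial : ℝ)) ^ 2 * ((k : ℝ) + 1)))
                * (G v' * (prim G v') ^ (k + 1)) := by
        intro v'
        rw [ih u' v', mul_add, Finset.mul_sum]
        congr 1
        exact Finset.sum_congr rfl fun k _ => by ring
      rw [intervalIntegral.integral_congr (fun v' _ => hpt v')]
      rw [intervalIntegral.integral_add]
      · rw [intervalIntegral.integral_finset_sum]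
        · congr 1
          · rw [intervalIntegral.integral_mul_const]
            unfold prim; ring
          · refine Finset.sum_congr rfl fun k _ => ?_
            rw [intervalIntegral.integral_const_mul, pow_prim_integral hG (k + 1) v]
            push_cast
            ring_nf
        · intro k _
          exact (continuous_const.mul (hG.mul ((prim_continuous hG).pow (k + 1)))).intervalIntegrable 0 v
      · exact (hG.mul continuous_const).intervalIntegrable 0 v
      · apply Continuous.intervalIntegrable
        exact continuous_finset_sum _ fun k _ =>
          continuous_const.mul (hG.mul ((prim_continuous hG).pow (k + 1)))
    -- outer integral
    have houter : (∫ u' in (0:ℝ)..u, F u' * ∫ v' in (0:ℝ)..v, G v' * S n u' v')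
        = akf w F 0 u * prim G v + ∑ k ∈ Finset.range n,
            (c ^ (k + 1) * (prim G v) ^ (k + 2)
              / (((k.factorial : ℝ)) ^ 2 * ((k : ℝ) + 1) * ((k : ℝ) + 2)))
              * (akf w F (k + 1) u / ((k : ℝ) + 1)) := by
      have hpt : ∀ u' : ℝ, F u' * (∫ v' in (0:ℝ)..v, G v' * S n u' v')
          = (w u') * prim G v + ∑ k ∈ Finset.range n,
              (c ^ (k + 1) * (prim G v) ^ (k + 2)
                / (((k.factorial : ℝ)) ^ 2 * ((k : ℝ) + 1) * ((k : ℝ) + 2)))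
                * (F u' * akf w F k u') := by
        intro u'
        rw [hinner u', mul_add, Finset.mul_sum]
        congr 1
        · rw [hw_def]; ring
        refine Finset.sum_congr rfl fun k _ => ?_
        have h1 : ((k.factorial : ℝ)) ≠ 0 := by positivity
        have h2 : ((k : ℝ) + 1) ≠ 0 := by positivity
        have h3 : ((k : ℝ) + 2) ≠ 0 := by positivity
        field_simp
      rw [intervalIntegral.integral_congr (fun u' _ => hpt u')]
      rw [intervalIntegral.integral_add]
      · rw [intervalIntegral.integral_finset_sum]
        · congr 1
          · rw [intervalIntegral.integral_mul_const, akf_zero_eq]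
          · refine Finset.sum_congr rfl fun k _ => ?_
            rw [intervalIntegral.integral_const_mul, key_lemma hw hF k u]
        · intro k _
          exact (continuous_const.mul (hF.mul (akf_continuous hw hF k))).intervalIntegrable 0 u
      · exact (hw.mul continuous_const).intervalIntegrable 0 u
      · apply Continuous.intervalIntegrable
        exact continuous_finset_sum _ fun k _ =>
          continuous_const.mul (hF.mul (akf_continuous hw hF k))
    rw [houter, Finset.sum_range_succ', mul_add, Finset.mul_sum]
    congr 1
    rw [add_comm]
    congr 1
    · refine Finset.sum_congr rfl fun k _ => ?_
      have hfact : (((k + 1).factorial : ℝ)) = ((k.factorial : ℝ)) * ((k : ℝ) + 1) := by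
        rw [Nat.factorial_succ]; push_cast; ring
      have h1 : ((k.factorial : ℝ)) ≠ 0 := by positivity
      have h2 : ((k : ℝ) + 1) ≠ 0 := by positivity
      have h3 : ((k : ℝ) + 2) ≠ 0 := by positivity
      rw [hfact]
      push_cast
      field_simp
      ring
    · norm_num
      ring

lemma akf_bound {w F : ℝ → ℝ} (hw : Continuous w) (hF : Continuous F) (u : ℝ) :
    ∃ C M : ℝ, 0 ≤ C ∧ 0 ≤ M ∧ ∀ k : ℕ, |akf w F k u| ≤ C * M ^ k := by
  obtain ⟨K, hK⟩ := isCompact_uIcc.exists_bound_of_continuousOn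
    (f := w) (hw.continuousOn (s := Set.uIcc (0:ℝ) u))
  obtain ⟨M, hM⟩ := isCompact_uIcc.exists_bound_of_continuousOn
    (f := fun s => prim F u - prim F s)
    ((continuous_const.sub (prim_continuous hF)).continuousOn (s := Set.uIcc (0:ℝ) u))
  have hK0 : 0 ≤ K := le_trans (norm_nonneg _) (hK 0 Set.left_mem_uIcc)
  have hM0 : 0 ≤ M := le_trans (norm_nonneg _) (hM 0 Set.left_mem_uIcc)
  refine ⟨K * |u|, M, by positivity, hM0, fun k => ?_⟩
  have hb : ∀ s ∈ Set.uIoc (0:ℝ) u, ‖w s * (prim F u - prim F s) ^ k‖ ≤ K * M ^ k := by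
    intro s hs
    have hs' : s ∈ Set.uIcc (0:ℝ) u := Set.uIoc_subset_uIcc hs
    rw [norm_mul, norm_pow]
    exact mul_le_mul (hK s hs') (pow_le_pow_left₀ (norm_nonneg _) (hM s hs') k)
      (by positivity) hK0
  have := intervalIntegral.norm_integral_le_of_norm_le_const hb
  simp only [sub_zero] at this
  calc |akf w F k u| ≤ K * M ^ k * |u| := this
    _ = K * |u| * M ^ k := by ring

lemma stepA {w F : ℝ → ℝ} (hw : Continuous w) (hF : Continuous F) (z u : ℝ) :
    HasSum (fun k : ℕ => z ^ k / ((k.factorial : ℝ)) ^ 2 * akf w F k u)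
      (∫ u' in (0:ℝ)..u, w u' * hyp0F1one (z * (prim F u - prim F u'))) := by
  obtain ⟨K, hK⟩ := isCompact_uIcc.exists_bound_of_continuousOn
    (f := w) (hw.continuousOn (s := Set.uIcc (0:ℝ) u))
  obtain ⟨M, hM⟩ := isCompact_uIcc.exists_bound_of_continuousOn
    (f := fun s => z * (prim F u - prim F s))
    ((continuous_const.mul (continuous_const.sub (prim_continuous hF))).continuousOn
      (s := Set.uIcc (0:ℝ) u))
  have hK0 : 0 ≤ K := le_trans (norm_nonneg _) (hK 0 Set.left_mem_uIcc)
  have hM0 : 0 ≤ M := le_trans (norm_nonneg _) (hM 0 Set.left_mem_uIcc)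
  have hmain : HasSum
      (fun k : ℕ => ∫ u' in (0:ℝ)..u,
        w u' * ((z * (prim F u - prim F u')) ^ k / ((k.factorial : ℝ)) ^ 2))
      (∫ u' in (0:ℝ)..u, w u' * hyp0F1one (z * (prim F u - prim F u'))) := by
    apply intervalIntegral.hasSum_integral_of_dominated_convergence
      (bound := fun k _ => K * (M ^ k / ((k.factorial : ℝ)) ^ 2))
    · intro k
      exact ((hw.mul (((continuous_const.mul (continuous_const.sub
        (prim_continuous hF))).pow k).div_const _))).aestronglyMeasurable
    · intro k
      filter_upwards with t ht
      have ht' : t ∈ Set.uIcc (0:ℝ) u := Set.uIoc_subset_uIcc ht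
      rw [norm_mul, norm_div, norm_pow]
      have h1 : ‖z * (prim F u - prim F t)‖ ^ k ≤ M ^ k :=
        pow_le_pow_left₀ (norm_nonneg _) (hM t ht') k
      have h2 : ‖((k.factorial : ℝ)) ^ 2‖ = ((k.factorial : ℝ)) ^ 2 := by
        rw [Real.norm_eq_abs, abs_of_nonneg (by positivity)]
      rw [h2]
      gcongr
      all_goals first
        | exact hK t ht'
        | exact hM t ht'
    · filter_upwards with t ht
      have hs := summable_pow_div_fact_sq M
      rw [abs_of_nonneg hM0] at hs
      exact hs.mul_left K
    · exact intervalIntegrable_const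
    · filter_upwards with t ht
      exact (hasSum_hyp _).mul_left (w t)
  have hcongr : ∀ k : ℕ, (∫ u' in (0:ℝ)..u,
      w u' * ((z * (prim F u - prim F u')) ^ k / ((k.factorial : ℝ)) ^ 2))
      = z ^ k / ((k.factorial : ℝ)) ^ 2 * akf w F k u := by
    intro k
    have hpt : ∀ s : ℝ, w s * ((z * (prim F u - prim F s)) ^ k / ((k.factorial : ℝ)) ^ 2)
        = (z ^ k / ((k.factorial : ℝ)) ^ 2) * (w s * (prim F u - prim F s) ^ k) := by
      intro s; rw [mul_pow]; ring
    rw [intervalIntegral.integral_congr (fun s _ => hpt s),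
      intervalIntegral.integral_const_mul]
    rfl
  simpa only [hcongr] using hmain

lemma stepB {w F G : ℝ → ℝ} (hw : Continuous w) (hF : Continuous F) (hG : Continuous G)
    (c u v : ℝ) :
    HasSum (fun k : ℕ => c ^ k / ((k.factorial : ℝ)) ^ 2 * akf w F k u
        * ((prim G v) ^ (k + 1) / ((k : ℝ) + 1)))
      (∫ v' in (0:ℝ)..v, G v' *
        ∫ u' in (0:ℝ)..u, w u' * hyp0F1one
          (c * (prim G v - prim G v') * (prim F u - prim F u'))) := by
  obtain ⟨C, M, hC0, hM0, hCM⟩ := akf_bound hw hF u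
  obtain ⟨KG, hKG⟩ := isCompact_uIcc.exists_bound_of_continuousOn
    (f := G) (hG.continuousOn (s := Set.uIcc (0:ℝ) v))
  obtain ⟨MG, hMG⟩ := isCompact_uIcc.exists_bound_of_continuousOn
    (f := fun t => c * (prim G v - prim G t))
    ((continuous_const.mul (continuous_const.sub (prim_continuous hG))).continuousOn
      (s := Set.uIcc (0:ℝ) v))
  have hKG0 : 0 ≤ KG := le_trans (norm_nonneg _) (hKG 0 Set.left_mem_uIcc)
  have hMG0 : 0 ≤ MG := le_trans (norm_nonneg _) (hMG 0 Set.left_mem_uIcc)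
  have hmain : HasSum
      (fun k : ℕ => ∫ v' in (0:ℝ)..v,
        G v' * ((c * (prim G v - prim G v')) ^ k / ((k.factorial : ℝ)) ^ 2 * akf w F k u))
      (∫ v' in (0:ℝ)..v, G v' *
        ∫ u' in (0:ℝ)..u, w u' * hyp0F1one
          (c * (prim G v - prim G v') * (prim F u - prim F u'))) := by
    apply intervalIntegral.hasSum_integral_of_dominated_convergence
      (bound := fun k _ => KG * C * ((MG * M) ^ k / ((k.factorial : ℝ)) ^ 2))
    · intro k
      exact (hG.mul ((((continuous_const.mul (continuous_const.sub
        (prim_continuous hG))).pow k).div_const _).mul continuous_const)).aestronglyMeasurable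
    · intro k
      filter_upwards with t ht
      have ht' : t ∈ Set.uIcc (0:ℝ) v := Set.uIoc_subset_uIcc ht
      have h1 : ‖(c * (prim G v - prim G t)) ^ k‖ ≤ MG ^ k := by
        rw [norm_pow]
        exact pow_le_pow_left₀ (norm_nonneg _) (hMG t ht') k
      have hfp : (0:ℝ) < ((k.factorial : ℝ)) ^ 2 := by positivity
      calc ‖G t * ((c * (prim G v - prim G t)) ^ k / ((k.factorial : ℝ)) ^ 2 * akf w F k u)‖
          = ‖G t‖ * (‖(c * (prim G v - prim G t)) ^ k‖ / ((k.factorial : ℝ)) ^ 2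
              * ‖akf w F k u‖) := by
            rw [norm_mul, norm_mul, norm_div,
              Real.norm_eq_abs ((((k:ℕ).factorial : ℝ)) ^ 2), abs_of_nonneg (le_of_lt hfp)]
        _ ≤ KG * (MG ^ k / ((k.factorial : ℝ)) ^ 2 * (C * M ^ k)) := by
            gcongr
            · exact hKG t ht'
            · exact hCM k
        _ = KG * C * ((MG * M) ^ k / ((k.factorial : ℝ)) ^ 2) := by
            rw [mul_pow]; ring
    · filter_upwards with t ht
      have hs := summable_pow_div_fact_sq (MG * M)
      rw [abs_of_nonneg (by positivity)] at hs
      exact hs.mul_left (KG * C)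
    · exact intervalIntegrable_const
    · filter_upwards with t ht
      exact (stepA hw hF (c * (prim G v - prim G t)) u).mul_left (G t)
  have hcongr : ∀ k : ℕ, (∫ v' in (0:ℝ)..v,
      G v' * ((c * (prim G v - prim G v')) ^ k / ((k.factorial : ℝ)) ^ 2 * akf w F k u))
      = c ^ k / ((k.factorial : ℝ)) ^ 2 * akf w F k u
        * ((prim G v) ^ (k + 1) / ((k : ℝ) + 1)) := by
    intro k
    have hpt : ∀ t : ℝ, G t * ((c * (prim G v - prim G t)) ^ k / ((k.factorial : ℝ)) ^ 2
          * akf w F k u)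
        = (c ^ k / ((k.factorial : ℝ)) ^ 2 * akf w F k u)
          * (G t * (prim G v - prim G t) ^ k) := by
      intro t; rw [mul_pow]; ring
    rw [intervalIntegral.integral_congr (fun t _ => hpt t),
      intervalIntegral.integral_const_mul]
    have : (∫ t in (0:ℝ)..v, G t * (prim G v - prim G t) ^ k)
        = (prim G v) ^ (k + 1) / ((k : ℝ) + 1) := bk_closed hG k v
    rw [this]
  simpa only [hcongr] using hmain

theorem stmt8 (μ hbar : ℝ) (hμ : 0 < μ) (hhbar : 0 < hbar)
    (F G : ℝ → ℝ) (hF : Continuous F) (hG : Continuous G)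
    (S : ℕ → ℝ → ℝ → ℝ)
    (hS0 : ∀ u v : ℝ, S 0 u v = u / 4)
    (hSn : ∀ (n : ℕ) (u v : ℝ), S (n + 1) u v =
      u / 4 + μ / (2 * hbar ^ 2) *
        ∫ u' in (0:ℝ)..u, F u' * ∫ v' in (0:ℝ)..v, G v' * S n u' v') :
    ∀ u v : ℝ,
      Filter.Tendsto (fun n : ℕ => S n u v) Filter.atTop
        (nhds (u / 4 + μ / (2 * hbar ^ 2) *
          ∫ v' in (0:ℝ)..v, G v' *
            ∫ u' in (0:ℝ)..u, F u' * (u' / 4) *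
              hyp0F1one (μ / (2 * hbar ^ 2) * (∫ s in v'..v, G s) *
                (∫ s in u'..u, F s)))) := by
  intro u v
  set c : ℝ := μ / (2 * hbar ^ 2) with hc
  have hw : Continuous (fun s : ℝ => F s * (s / 4)) := hF.mul (continuous_id.div_const 4)
  have hrep := rep_lemma c hF hG S hS0 hSn
  have hGsub : ∀ v' : ℝ, (∫ s in v'..v, G s) = prim G v - prim G v' :=
    fun v' => integral_eq_prim_sub hG v' v
  have hFsub : ∀ u' : ℝ, (∫ s in u'..u, F s) = prim F u - prim F u' :=
    fun u' => integral_eq_prim_sub hF u' u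
  have hB := (stepB hw hF hG c u v).mul_left c
  have hterm : (fun k : ℕ => c * (c ^ k / ((k.factorial : ℝ)) ^ 2
        * akf (fun s : ℝ => F s * (s / 4)) F k u * ((prim G v) ^ (k + 1) / ((k : ℝ) + 1))))
      = fun k : ℕ => c ^ (k + 1) * akf (fun s : ℝ => F s * (s / 4)) F k u
          * (prim G v) ^ (k + 1) / (((k.factorial : ℝ)) ^ 2 * ((k : ℝ) + 1)) := by
    funext k
    have h1 : ((k.factorial : ℝ)) ≠ 0 := by positivity
    have h2 : ((k : ℝ) + 1) ≠ 0 := by positivity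
    field_simp
    ring
  rw [hterm] at hB
  have htend := tendsto_const_nhds (x := u / 4) (f := atTop (α := ℕ)) |>.add hB.tendsto_sum_nat
  have hfun : (fun n : ℕ => S n u v) = fun n : ℕ => u / 4 + ∑ k ∈ Finset.range n,
      c ^ (k + 1) * akf (fun s : ℝ => F s * (s / 4)) F k u
        * (prim G v) ^ (k + 1) / (((k.factorial : ℝ)) ^ 2 * ((k : ℝ) + 1)) :=
    funext fun n => hrep n u v
  rw [hfun]
  simp only [hGsub, hFsub]
  exact htend
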